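/- Let D ≥ 1, and for each pair of bits b, g ∈ F₂ let ρ_b^g be a density matrix on ℂ^D and P̃_b^g a D×D complex matrix, satisfying for all a, b ∈ F₂: P̃_b^0 + P̃_b^1 = 1, P̃_b^a ρ_{b̄}^0 P̃_b^a = P̃_b^a ρ_{b̄}^1 P̃_b^a, and P̃_b^a ρ_{b̄}^0 P̃_b^{ā} = − P̃_b^a ρ_{b̄}^1 P̃_b^{ā} (where x̄ = 1 ⊕ x). Fix b ∈ F₂ⁿ, let C₀ ⊆ F₂ⁿ be a linear subspace, and set ρ_{C₀} = |C₀|⁻¹ Σ_{g ∈ C₀} ⊗_{k=1}^n ρ_{b̄[k]}^{g[k]}. Then for all k, l ∈ F₂ⁿ: if k ⊕ l lies in the dual code C₀^⊥ = {w ∈ F₂ⁿ : w·g = 0 for all g ∈ C₀} then (⊗_{i=1}^n P̃_{b[i]}^{k[i]}) · ρ_{C₀} · (⊗_{i=1}^n P̃_{b[i]}^{l[i]}) = (⊗_{i=1}^n P̃_{b[i]}^{k[i]}) · (⊗_{k=1}^n ρ_{b̄[k]}^{0}) · (⊗_{i=1}^n P̃_{b[i]}^{l[i]}), and otherwise (⊗_{i=1}^n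 P̃_{b[i]}^{k[i]}) · ρ_{C₀} · (⊗_{i=1}^n P̃_{b[i]}^{l[i]}) = 0. -/

import Mathlib

open Matrix
open scoped ComplexOrder Classical

/-- The `n`-fold Kronecker/tensor product `⊗_{i=1}^n M_i`, as a matrix acting on
`(ℂ^D)^{⊗n}` (indexed by functions `Fin n → Fin D`). -/
noncomputable def tpow {D n : ℕ} (M : Fin n → Matrix (Fin D) (Fin D) ℂ) :
    Matrix (Fin n → Fin D) (Fin n → Fin D) ℂ :=
  Matrix.of fun x y => ∏ i, M i (x i) (y i)

/-- `ρ_A = |A|⁻¹ Σ_{g ∈ A} ⊗_{k=1}^n ρ_{b̄[k]}^{g[k]}`. -/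
noncomputable def rhoOf {D n : ℕ} (ρ : ZMod 2 → ZMod 2 → Matrix (Fin D) (Fin D) ℂ)
    (b : Fin n → ZMod 2) (A : Finset (Fin n → ZMod 2)) :
    Matrix (Fin n → Fin D) (Fin n → Fin D) ℂ :=
  ((A.card : ℂ))⁻¹ • ∑ g ∈ A, tpow (fun k => ρ (b k + 1) (g k))


noncomputable def chi (x : ZMod 2) : ℂ := if x = 0 then 1 else -1

lemma chi_add (x y : ZMod 2) : chi (x + y) = chi x * chi y := by
  rcases (show ∀ z : ZMod 2, z = 0 ∨ z = 1 from by decide) x with h | h <;>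
  rcases (show ∀ z : ZMod 2, z = 0 ∨ z = 1 from by decide) y with h' | h' <;>
  subst h <;> subst h' <;>
  norm_num [chi, show (1 + 1 : ZMod 2) = 0 from by decide,
    show (1 : ZMod 2) ≠ 0 from by decide] <;> try decide

lemma chi_sum {ι : Type*} (s : Finset ι) (f : ι → ZMod 2) :
    chi (∑ i ∈ s, f i) = ∏ i ∈ s, chi (f i) := by
  induction s using Finset.cons_induction with
  | empty => simp [chi]
  | cons a s ha ih => rw [Finset.sum_cons, Finset.prod_cons, chi_add, ih]

lemma tpow_mul {D n : ℕ} (A B : Fin n → Matrix (Fin D) (Fin D) ℂ) :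
    tpow A * tpow B = tpow (fun i => A i * B i) := by
  ext x y
  simp only [tpow, Matrix.mul_apply, Matrix.of_apply, ← Finset.prod_mul_distrib]
  rw [← Fintype.piFinset_univ, Finset.prod_univ_sum]

lemma tpow_smul {D n : ℕ} (c : Fin n → ℂ) (M : Fin n → Matrix (Fin D) (Fin D) ℂ) :
    tpow (fun i => c i • M i) = (∏ i, c i) • tpow M := by
  ext x y
  simp [tpow, Finset.prod_mul_distrib]

lemma sandwich {D : ℕ} (ρ Pt : ZMod 2 → ZMod 2 → Matrix (Fin D) (Fin D) ℂ)
    (hPt2 : ∀ a b : ZMod 2,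
      Pt b a * ρ (b + 1) 0 * Pt b a = Pt b a * ρ (b + 1) 1 * Pt b a)
    (hPt3 : ∀ a b : ZMod 2,
      Pt b a * ρ (b + 1) 0 * Pt b (a + 1) = -(Pt b a * ρ (b + 1) 1 * Pt b (a + 1)))
    (bb a c g : ZMod 2) :
    Pt bb a * ρ (bb + 1) g * Pt bb c
      = chi ((a + c) * g) • (Pt bb a * ρ (bb + 1) 0 * Pt bb c) := by
  rcases (show ∀ z : ZMod 2, z = 0 ∨ z = 1 from by decide) g with hg | hg
  · subst hg; simp [chi]
  · subst hg
    rcases (show ∀ x y : ZMod 2, y = x ∨ y = x + 1 from by decide) a c with hc | hc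
    · rw [hc]
      rw [show ((a + a) * 1 : ZMod 2) = 0 from by
        rcases (show ∀ z : ZMod 2, z = 0 ∨ z = 1 from by decide) a with h | h <;> subst h <;> decide]
      rw [show chi 0 = 1 from by simp [chi], one_smul]
      exact (hPt2 a bb).symm
    · rw [hc]
      rw [show ((a + (a + 1)) * 1 : ZMod 2) = 1 from by
        rcases (show ∀ z : ZMod 2, z = 0 ∨ z = 1 from by decide) a with h | h <;> subst h <;> decide]
      rw [show chi 1 = -1 from by simp [chi]]
      rw [hPt3 a bb]
      simp

lemma sum_chi_zero {n : ℕ} (C0 : Submodule (ZMod 2) (Fin n → ZMod 2)) (w : Fin n → ZMod 2)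
    (h : ¬ ∀ g ∈ C0, w ⬝ᵥ g = 0) :
    ∑ g ∈ Finset.univ.filter (fun g => g ∈ C0), chi (w ⬝ᵥ g) = 0 := by
  push_neg at h
  obtain ⟨g0, hg0, hne⟩ := h
  have hone : w ⬝ᵥ g0 = 1 := by
    rcases (show ∀ z : ZMod 2, z = 0 ∨ z = 1 from by decide) (w ⬝ᵥ g0) with h | h
    · exact absurd h hne
    · exact h
  have hself : ∀ x : Fin n → ZMod 2, x + g0 + g0 = x := by
    intro x; funext i
    simp [add_assoc, show ∀ y : ZMod 2, y + y = 0 from by decide]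
  have hmem : ∀ g, g ∈ C0 ↔ g + g0 ∈ C0 := by
    intro g
    constructor
    · exact fun hg => C0.add_mem hg hg0
    · intro hg; have := C0.add_mem hg hg0; rwa [hself] at this
  set S := Finset.univ.filter (fun g => g ∈ C0) with hSdef
  have heq : ∑ g ∈ S, chi (w ⬝ᵥ (g + g0)) = ∑ g ∈ S, chi (w ⬝ᵥ g) := by
    refine Finset.sum_equiv (Equiv.addRight g0) ?_ (fun i _ => rfl)
    intro i
    simp only [hSdef, Finset.mem_filter, Finset.mem_univ, true_and, Equiv.coe_addRight]
    exact hmem i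
  have heq2 : ∑ g ∈ S, chi (w ⬝ᵥ (g + g0)) = -∑ g ∈ S, chi (w ⬝ᵥ g) := by
    rw [← Finset.sum_neg_distrib]
    refine Finset.sum_congr rfl (fun g _ => ?_)
    rw [dotProduct_add, chi_add, hone, show chi 1 = -1 from by simp [chi]]
    ring
  have h2 : (2 : ℂ) * ∑ g ∈ S, chi (w ⬝ᵥ g) = 0 := by
    linear_combination heq2 - heq
  rcases mul_eq_zero.mp h2 with h | h
  · norm_num at h
  · exact h

/-- if `k ⊕ l ∈ C₀^⊥` then
`P̃_b^k ρ_{C₀} P̃_b^l = P̃_b^k (⊗_k ρ_{b̄[k]}^0) P̃_b^l`, and otherwise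
`P̃_b^k ρ_{C₀} P̃_b^l = 0`. -/
theorem stmt11 (D n : ℕ) (hD : 1 ≤ D)
    (ρ Pt : ZMod 2 → ZMod 2 → Matrix (Fin D) (Fin D) ℂ)
    (hρ : ∀ b g, (ρ b g).PosSemidef ∧ (ρ b g).trace = 1)
    (hPt1 : ∀ b : ZMod 2, Pt b 0 + Pt b 1 = 1)
    (hPt2 : ∀ a b : ZMod 2,
      Pt b a * ρ (b + 1) 0 * Pt b a = Pt b a * ρ (b + 1) 1 * Pt b a)
    (hPt3 : ∀ a b : ZMod 2,
      Pt b a * ρ (b + 1) 0 * Pt b (a + 1) = -(Pt b a * ρ (b + 1) 1 * Pt b (a + 1)))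
    (b : Fin n → ZMod 2)
    (C0 : Submodule (ZMod 2) (Fin n → ZMod 2))
    (k l : Fin n → ZMod 2) :
    ((∀ g ∈ C0, (k + l) ⬝ᵥ g = 0) →
      tpow (fun i => Pt (b i) (k i)) *
          rhoOf ρ b (Finset.univ.filter (fun g => g ∈ C0)) *
          tpow (fun i => Pt (b i) (l i)) =
        tpow (fun i => Pt (b i) (k i)) *
          tpow (fun i => ρ (b i + 1) 0) *
          tpow (fun i => Pt (b i) (l i))) ∧
    (¬ (∀ g ∈ C0, (k + l) ⬝ᵥ g = 0) →
      tpow (fun i => Pt (b i) (k i)) *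
          rhoOf ρ b (Finset.univ.filter (fun g => g ∈ C0)) *
          tpow (fun i => Pt (b i) (l i)) = 0) := by
    classical
  set S : Finset (Fin n → ZMod 2) := Finset.univ.filter (fun g => g ∈ C0) with hSdef
  have hScard : (S.card : ℂ) ≠ 0 := by
    have h0 : (0 : Fin n → ZMod 2) ∈ S := by simp [hSdef, C0.zero_mem]
    have := Finset.card_pos.mpr ⟨_, h0⟩
    exact_mod_cast this.ne'
  have hterm : ∀ g ∈ S,
      tpow (fun i => Pt (b i) (k i)) * tpow (fun i => ρ (b i + 1) (g i)) *
          tpow (fun i => Pt (b i) (l i))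
        = chi ((k + l) ⬝ᵥ g) •
            (tpow (fun i => Pt (b i) (k i)) * tpow (fun i => ρ (b i + 1) 0) *
              tpow (fun i => Pt (b i) (l i))) := by
    intro g _
    rw [tpow_mul, tpow_mul, tpow_mul, tpow_mul]
    rw [show (fun i => Pt (b i) (k i) * ρ (b i + 1) (g i) * Pt (b i) (l i))
        = fun i => chi ((k i + l i) * g i) • (Pt (b i) (k i) * ρ (b i + 1) 0 * Pt (b i) (l i))
      from funext fun i => sandwich ρ Pt hPt2 hPt3 (b i) (k i) (l i) (g i)]
    rw [tpow_smul]
    congr 1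
    rw [← chi_sum]
    congr 1
  have hmain : tpow (fun i => Pt (b i) (k i)) * rhoOf ρ b S * tpow (fun i => Pt (b i) (l i))
      = (S.card : ℂ)⁻¹ • ((∑ g ∈ S, chi ((k + l) ⬝ᵥ g)) •
          (tpow (fun i => Pt (b i) (k i)) * tpow (fun i => ρ (b i + 1) 0) *
            tpow (fun i => Pt (b i) (l i)))) := by
    unfold rhoOf
    rw [Matrix.mul_smul, Matrix.smul_mul, Finset.mul_sum, Finset.sum_mul, Finset.sum_smul]
    congr 1
    exact Finset.sum_congr rfl hterm
  constructor
  · intro h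
    rw [hmain]
    have h1 : ∀ g ∈ S, chi ((k + l) ⬝ᵥ g) = 1 := by
      intro g hg
      rw [h g (by simpa [hSdef] using hg)]
      simp [chi]
    rw [show ∑ g ∈ S, chi ((k + l) ⬝ᵥ g) = (S.card : ℂ) from by
      rw [Finset.sum_congr rfl h1]; simp]
    rw [smul_smul, inv_mul_cancel₀ hScard, one_smul]
  · intro h
    rw [hmain, sum_chi_zero C0 (k + l) h, zero_smul, smul_zero]
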